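/- Let ℝ^n be decomposed into d blocks with probabilities p_1,…,p_d > 0 summing to 1, p_min := min_i p_i, p_max := max_i p_i. Let X = X_1 × ⋯ × X_d with each X_i ⊆ ℝ^{n_i} nonempty, closed, and convex; let f : ℝ^n → ℝ be continuously differentiable and μ_f-strongly convex on X with ∇f Lipschitz with constant L_f > 0; let F : ℝ^n → ℝ^n be continuous and monotone on X satisfying ‖F(x) − F(y)‖² ≤ L_F² ‖x − y‖² + B_F for all x, y ∈ X with L_F, B_F ≥ 0. Let γ_0 ≥ γ > 0 and η_0 ≥ η_{k−1} ≥ η_k > 0 satisfy γ/η_k ≤ μ_f p_min / (2 p_max (L_F² + η_0² L_f²)). Let x*_{η_k} and x*_{η_{k−1}} be the unique solutions of VI(X, F + η_k ∇f) and VI(X, F + η_{k−1} ∇f), and suppose ‖∇f(x*_{η_{k−1}})‖ ≤ C̄_f. For x ∈ X and each i ∈ {1,…,d}, let x⁺(i) ∈ ℝ^n be defined by x⁺(i)^{(i)} := P_{X_i}(x^{(i)} − γ(F_i(x) + η_k ∇_i f(x))) and x⁺(i)^{(j)} := x^{(j)} for j ≠ i. Then: Σ_{i=1}^d p_i 𝒟(x⁺(i),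 x*_{η_k}) ≤ (p_max/p_min)(1 − p_min μ_f γ η_k / 2) 𝒟(x, x*_{η_{k−1}}) + (C̄_f² (μ_f γ_0 η_0 + 2/p_min) / (μ_f³ p_min γ η_k)) (η_{k−1}/η_k − 1)² + 2γ² B_F. -/

import Mathlib

open scoped RealInnerProductSpace

/-- `ℝ^n` decomposed into `d` blocks: `ℝ^{n 0} × ⋯ × ℝ^{n (d-1)}` with the Euclidean norm. -/
abbrev BlockSpace (d : ℕ) (n : Fin d → ℕ) :=
  PiLp 2 (fun i : Fin d => EuclideanSpace ℝ (Fin (n i)))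

/-- The solution set `SOL(X,G)` of the variational inequality `VI(X,G)`. -/
def VISol {d : ℕ} {n : Fin d → ℕ} (X : Set (BlockSpace d n))
    (G : BlockSpace d n → BlockSpace d n) : Set (BlockSpace d n) :=
  {x | x ∈ X ∧ ∀ y ∈ X, 0 ≤ ⟪G x, y - x⟫}

set_option maxHeartbeats 1000000

lemma proj_inner_le {E : Type*} [NormedAddCommGroup E] [InnerProductSpace ℝ E] {K : Set E}
    (hK : Convex ℝ K) {z q : E} (hq : q ∈ K) (hmin : ∀ w ∈ K, ‖z - q‖ ≤ ‖z - w‖) :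
    ∀ w ∈ K, ⟪z - q, w - q⟫ ≤ 0 := by
  intro w hw
  set c := ⟪z - q, w - q⟫ with hc
  set s := ‖w - q‖ ^ 2 with hs
  have hsnn : 0 ≤ s := sq_nonneg _
  have key : ∀ t : ℝ, 0 < t → t ≤ 1 → 2 * c ≤ t * s := by
    intro t ht0 ht1
    have hmem : q + t • (w - q) ∈ K := by
      have h := hK hq hw (by linarith : (0:ℝ) ≤ 1 - t) ht0.le (by ring)
      have : (1 - t) • q + t • w = q + t • (w - q) := by
        rw [smul_sub, sub_smul, one_smul]; abel
      rwa [this] at h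
    have h2 := hmin _ hmem
    have hre : z - (q + t • (w - q)) = (z - q) - t • (w - q) := by abel
    have hexp : ‖z - (q + t • (w - q))‖ ^ 2 = ‖z - q‖ ^ 2 - 2 * t * c + t ^ 2 * s := by
      rw [hre, norm_sub_sq_real, real_inner_smul_right, norm_smul, hs]
      simp [mul_pow, abs_of_pos ht0]
      ring
    have h3 : ‖z - q‖ ^ 2 ≤ ‖z - (q + t • (w - q))‖ ^ 2 := by
      have := norm_nonneg (z - q)
      nlinarith [h2]
    nlinarith
  by_contra hpos
  push_neg at hpos
  rcases eq_or_lt_of_le hsnn with hs0 | hs0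
  · have := key 1 one_pos le_rfl
    rw [← hs0] at this; linarith
  · have ht0 : 0 < min 1 (c / s) := lt_min one_pos (div_pos hpos hs0)
    have := key _ ht0 (min_le_left _ _)
    have h5 : min 1 (c / s) * s ≤ (c / s) * s :=
      mul_le_mul_of_nonneg_right (min_le_right _ _) hsnn
    rw [div_mul_cancel₀ _ (ne_of_gt hs0)] at h5
    linarith


section AuxScalar

private lemma aux_sq_le_sq {t1 t2 c : ℝ} (h1 : 0 ≤ t1) (h2 : 0 ≤ t2)
    (hs : t1 ^ 2 ≤ c) (hcs : c ≤ t2 * t1) : t1 ^ 2 ≤ t2 ^ 2 := by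
  nlinarith [sq_nonneg (t1 - t2)]

private lemma aux_gsq {G nF nG nW LF BF Lf ηk : ℝ} (hG0 : 0 ≤ G) (hnF : 0 ≤ nF)
    (hnG : 0 ≤ nG) (hηk : 0 < ηk) (hLf : 0 < Lf) (hnW : 0 ≤ nW)
    (htri : G ≤ nF + ηk * nG) (hF : nF ^ 2 ≤ LF ^ 2 * nW ^ 2 + BF) (hgrad : nG ≤ Lf * nW) :
    G ^ 2 ≤ 2 * (LF ^ 2 * nW ^ 2 + BF) + 2 * ηk ^ 2 * Lf ^ 2 * nW ^ 2 := by
  have h1 : G ^ 2 ≤ (nF + ηk * nG) ^ 2 := by nlinarith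
  have h2 : (nF + ηk * nG) ^ 2 ≤ 2 * nF ^ 2 + 2 * (ηk * nG) ^ 2 := by
    nlinarith [sq_nonneg (nF - ηk * nG)]
  have h3 : (ηk * nG) ^ 2 ≤ ηk ^ 2 * (Lf * nW) ^ 2 := by
    have e1 : nG * nG ≤ (Lf * nW) * (Lf * nW) :=
      mul_le_mul hgrad hgrad hnG (mul_nonneg hLf.le hnW)
    nlinarith [mul_le_mul_of_nonneg_left e1 (sq_nonneg ηk)]
  nlinarith [sq_nonneg ηk]

private lemma aux_uv {W G2 IP LF BF Lf ηk μf γ pmin pmax η0 : ℝ}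
    (hW : 0 ≤ W) (hIP : ηk * μf * W ≤ IP)
    (hG : G2 ≤ 2 * (LF ^ 2 * W + BF) + 2 * ηk ^ 2 * Lf ^ 2 * W)
    (h1 : γ * (2 * pmax * (LF ^ 2 + η0 ^ 2 * Lf ^ 2)) ≤ μf * pmin * ηk)
    (hηk : 0 < ηk) (hη0 : ηk ≤ η0) (hγ : 0 < γ) (hpmax : 0 < pmax) (hpm : pmin ≤ pmax)
    (hμf : 0 < μf) (hLF : 0 ≤ LF) (hBF : 0 ≤ BF) (hLf : 0 < Lf) :
    W - 2 * (γ * IP) + γ ^ 2 * G2 ≤ (1 - γ * ηk * μf) * W + 2 * γ ^ 2 * BF := by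
  have hr : 2 * γ ^ 2 * (LF ^ 2 + ηk ^ 2 * Lf ^ 2) ≤ γ * ηk * μf := by
    have e1 : ηk ^ 2 ≤ η0 ^ 2 := by nlinarith
    have e2 : 2 * γ ^ 2 * (LF ^ 2 + ηk ^ 2 * Lf ^ 2) * pmax ≤ (γ * ηk * μf) * pmax := by
      have t1 : γ * (γ * (2 * pmax * (LF ^ 2 + η0 ^ 2 * Lf ^ 2))) ≤ γ * (μf * pmin * ηk) :=
        mul_le_mul_of_nonneg_left h1 hγ.le
      have t2 : (2 * γ ^ 2 * pmax * Lf ^ 2) * ηk ^ 2 ≤ (2 * γ ^ 2 * pmax * Lf ^ 2) * η0 ^ 2 :=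
        mul_le_mul_of_nonneg_left e1 (by positivity)
      have t3 : (γ * μf * ηk) * pmin ≤ (γ * μf * ηk) * pmax :=
        mul_le_mul_of_nonneg_left hpm (by positivity)
      nlinarith [t1, t2, t3]
    exact le_of_mul_le_mul_right e2 hpmax
  have hA1 : 2 * γ * (ηk * μf * W) ≤ 2 * γ * IP :=
    mul_le_mul_of_nonneg_left hIP (by linarith)
  have hA2 : γ ^ 2 * G2 ≤ γ ^ 2 * (2 * (LF ^ 2 * W + BF) + 2 * ηk ^ 2 * Lf ^ 2 * W) :=
    mul_le_mul_of_nonneg_left hG (sq_nonneg γ)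
  have hA3 : 2 * γ ^ 2 * (LF ^ 2 + ηk ^ 2 * Lf ^ 2) * W ≤ (γ * ηk * μf) * W :=
    mul_le_mul_of_nonneg_right hr hW
  nlinarith

private lemma aux_delta {Δ A1 A2 B1 B2 Cf μf ηk ηk1 : ℝ}
    (h1 : 0 ≤ -A1 - ηk * B1) (h2 : 0 ≤ A2 + ηk1 * B2)
    (hm : 0 ≤ A1 - A2) (hsmp : μf * Δ ^ 2 ≤ B1 - B2)
    (hb2 : B2 ≤ Cf * Δ) (hΔ0 : 0 ≤ Δ) (hμf : 0 < μf) (hηk : 0 < ηk)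
    (hηk1 : ηk ≤ ηk1) (hCf : 0 ≤ Cf) :
    Δ ^ 2 ≤ (Cf / μf) ^ 2 * (ηk1 / ηk - 1) ^ 2 := by
  have key : μf * ηk * Δ ^ 2 ≤ (ηk1 - ηk) * (Cf * Δ) := by
    have s1 : ηk * (μf * Δ ^ 2) ≤ ηk * (B1 - B2) := mul_le_mul_of_nonneg_left hsmp hηk.le
    have s2 : (ηk1 - ηk) * B2 ≤ (ηk1 - ηk) * (Cf * Δ) :=
      mul_le_mul_of_nonneg_left hb2 (by linarith)
    nlinarith
  have tnn : 0 ≤ μf * ηk * Δ := by positivity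
  have cnn : 0 ≤ Cf * (ηk1 - ηk) := mul_nonneg hCf (by linarith)
  have tsq : (μf * ηk * Δ) ^ 2 ≤ (Cf * (ηk1 - ηk)) ^ 2 := by
    have : (μf * ηk * Δ) ^ 2 ≤ (Cf * (ηk1 - ηk)) * (μf * ηk * Δ) := by
      nlinarith [mul_le_mul_of_nonneg_left key (mul_nonneg hμf.le hηk.le)]
    nlinarith [sq_nonneg (μf * ηk * Δ - Cf * (ηk1 - ηk))]
  have heq : (Cf / μf) ^ 2 * (ηk1 / ηk - 1) ^ 2 = (Cf * (ηk1 - ηk)) ^ 2 / (μf * ηk) ^ 2 := by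
    field_simp
  rw [heq, le_div_iff₀ (by positivity)]
  nlinarith

private lemma aux_young {α β t q a : ℝ} (ha : 0 < a) (hq : 0 ≤ q) (ht : t ≤ α + β)
    (ht0 : 0 ≤ t) (hα : 0 ≤ α) (hβ : 0 ≤ β) :
    q * t ^ 2 ≤ (1 + a) * (q * α ^ 2) + (1 + 1 / a) * (q * β ^ 2) := by
  have h1 : t ^ 2 ≤ (1 + a) * α ^ 2 + (1 + 1 / a) * β ^ 2 := by
    have h2 : a * ((1 + a) * α ^ 2 + (1 + 1 / a) * β ^ 2 - (α + β) ^ 2) = (a * α - β) ^ 2 := by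
      field_simp
      ring
    have h4 : 0 ≤ (1 + a) * α ^ 2 + (1 + 1 / a) * β ^ 2 - (α + β) ^ 2 := by
      nlinarith [sq_nonneg (a * α - β), h2, ha]
    have h5 : t ^ 2 ≤ (α + β) ^ 2 := by nlinarith
    linarith
  nlinarith

private lemma aux_term {c q t : ℝ} (hq : 0 < q) (hc : 0 < c) (hcq : c ≤ q) (ht : 0 ≤ t) :
    c * (q⁻¹ * t) ≤ t := by
  have h1 : c * q⁻¹ ≤ 1 := by
    rw [← mul_inv_cancel₀ hq.ne']
    exact mul_le_mul_of_nonneg_right hcq (inv_nonneg.mpr hq.le)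
  nlinarith

private lemma aux_quarter {a pmin pmax μf γ ηk η0 Lf LF : ℝ}
    (ha_def : a = pmin * μf * γ * ηk / 2)
    (h1 : γ * (2 * pmax * (LF ^ 2 + η0 ^ 2 * Lf ^ 2)) ≤ μf * pmin * ηk)
    (hμL : μf ≤ Lf) (hpmin : 0 < pmin) (hpmax : 0 < pmax) (hpm : pmin ≤ pmax)
    (hpmin1 : pmin ≤ 1) (hμf : 0 < μf) (hγ : 0 < γ) (hηk : 0 < ηk) (hη0 : ηk ≤ η0)
    (hLf : 0 < Lf) (hLF : 0 ≤ LF) : a ≤ 1 / 4 := by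
  have e1 : ηk ^ 2 ≤ η0 ^ 2 := by nlinarith
  have k1 : γ * (2 * pmax * (ηk ^ 2 * Lf ^ 2)) ≤ μf * pmin * ηk := by
    have i1 : ηk ^ 2 * Lf ^ 2 ≤ η0 ^ 2 * Lf ^ 2 := mul_le_mul_of_nonneg_right e1 (sq_nonneg Lf)
    have i2 : ηk ^ 2 * Lf ^ 2 ≤ LF ^ 2 + η0 ^ 2 * Lf ^ 2 := by nlinarith [sq_nonneg LF]
    have i3 : (2 * γ * pmax) * (ηk ^ 2 * Lf ^ 2) ≤ (2 * γ * pmax) * (LF ^ 2 + η0 ^ 2 * Lf ^ 2) :=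
      mul_le_mul_of_nonneg_left i2 (by positivity)
    nlinarith [i3, h1]
  have k2 : 2 * γ * pmax * ηk * Lf ^ 2 ≤ μf * pmin := by
    have : (2 * γ * pmax * ηk * Lf ^ 2) * ηk ≤ (μf * pmin) * ηk := by nlinarith
    exact le_of_mul_le_mul_right this hηk
  have k3 : a * (4 * pmax * Lf ^ 2) ≤ 1 / 4 * (4 * pmax * Lf ^ 2) := by
    have s1 : (pmin * μf) * (2 * γ * pmax * ηk * Lf ^ 2) ≤ (pmin * μf) * (μf * pmin) :=
      mul_le_mul_of_nonneg_left k2 (mul_nonneg hpmin.le hμf.le)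
    have s2 : pmin ^ 2 * μf ^ 2 ≤ pmax * Lf ^ 2 := by
      have u1 : μf ^ 2 ≤ Lf ^ 2 := by nlinarith
      have u2 : pmin ^ 2 ≤ pmax := by nlinarith
      have u3 : pmin ^ 2 * μf ^ 2 ≤ pmin ^ 2 * Lf ^ 2 :=
        mul_le_mul_of_nonneg_left u1 (sq_nonneg pmin)
      have u4 : pmin ^ 2 * Lf ^ 2 ≤ pmax * Lf ^ 2 :=
        mul_le_mul_of_nonneg_right u2 (sq_nonneg Lf)
      linarith
    rw [ha_def]
    nlinarith [s1, s2]
  have hpos : 0 < 4 * pmax * Lf ^ 2 := by positivity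
  exact le_of_mul_le_mul_right k3 hpos

private lemma aux_final {A D0 D1 S T Δsq r a pmin pmax μf γ ηk γ0 η0 Cf BF : ℝ}
    (hA : A = D0 + S - T)
    (hS : S ≤ (1 - γ * ηk * μf) * T + 2 * γ ^ 2 * BF)
    (hT : pmin * D0 ≤ T)
    (hD1 : 0 ≤ D1) (hD0 : 0 ≤ D0)
    (ha_def : a = pmin * μf * γ * ηk / 2) (ha : 0 < a) (ha14 : a ≤ 1 / 4)
    (hD01 : D0 ≤ (1 + a) * D1 + (1 + 1 / a) * (pmin⁻¹ * Δsq))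
    (hΔ : Δsq ≤ (Cf / μf) ^ 2 * r ^ 2) (hΔ0 : 0 ≤ Δsq)
    (hpmin : 0 < pmin) (hpmax : 0 < pmax) (hpm : pmin ≤ pmax)
    (hμf : 0 < μf) (hγ : 0 < γ) (hηk : 0 < ηk) (hγ0 : γ ≤ γ0) (hη0 : ηk ≤ η0)
    (hCf : 0 ≤ Cf) (hγ0p : 0 < γ0) (hη0p : 0 < η0) (hBF : 0 ≤ BF) :
    A ≤ pmax / pmin * (1 - a) * D1
      + Cf ^ 2 * (μf * γ0 * η0 + 2 / pmin) / (μf ^ 3 * pmin * γ * ηk) * r ^ 2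
      + 2 * γ ^ 2 * BF := by
  have hr2 : (0:ℝ) ≤ r ^ 2 := sq_nonneg r
  have h2 : A ≤ (1 - 2 * a) * D0 + 2 * γ ^ 2 * BF := by
    have e1 : (γ * ηk * μf) * (pmin * D0) ≤ (γ * ηk * μf) * T :=
      mul_le_mul_of_nonneg_left hT (by positivity)
    have e2 : a * D0 = pmin * μf * γ * ηk / 2 * D0 := by rw [ha_def]
    nlinarith [e1, e2, hS]
  have h3 : (0:ℝ) ≤ 1 - 2 * a := by linarith
  have hia : 0 < 1 + 1 / a := by positivity
  have hB2 : 0 ≤ (1 + 1 / a) * (pmin⁻¹ * Δsq) :=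
    mul_nonneg hia.le (mul_nonneg (inv_nonneg.mpr hpmin.le) hΔ0)
  have h4 : A ≤ (1 - 2 * a) * ((1 + a) * D1) + (1 - 2 * a) * ((1 + 1 / a) * (pmin⁻¹ * Δsq))
      + 2 * γ ^ 2 * BF := by
    have hd01 := mul_le_mul_of_nonneg_left hD01 h3
    have hdist : (1 - 2 * a) * ((1 + a) * D1 + (1 + 1 / a) * (pmin⁻¹ * Δsq))
        = (1 - 2 * a) * ((1 + a) * D1) + (1 - 2 * a) * ((1 + 1 / a) * (pmin⁻¹ * Δsq)) := by
      ring
    linarith [hd01, h2, hdist]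
  have h5 : (1 - 2 * a) * ((1 + a) * D1) ≤ (1 - a) * D1 := by
    nlinarith [mul_nonneg (sq_nonneg a) hD1]
  have h6 : (1 - a) * D1 ≤ pmax / pmin * (1 - a) * D1 := by
    have hd : (1:ℝ) ≤ pmax / pmin := (one_le_div hpmin).mpr hpm
    nlinarith [mul_nonneg (mul_nonneg (by linarith : (0:ℝ) ≤ pmax / pmin - 1)
      (by linarith : (0:ℝ) ≤ 1 - a)) hD1]
  have h7 : (1 - 2 * a) * ((1 + 1 / a) * (pmin⁻¹ * Δsq)) ≤ (1 + 1 / a) * (pmin⁻¹ * Δsq) := by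
    nlinarith [mul_nonneg ha.le hB2]
  have h8 : (1 + 1 / a) * (pmin⁻¹ * Δsq)
      ≤ Cf ^ 2 * (μf * γ0 * η0 + 2 / pmin) / (μf ^ 3 * pmin * γ * ηk) * r ^ 2 := by
    have step1 : (1 + 1 / a) * (pmin⁻¹ * Δsq) ≤ (1 + 1 / a) * (pmin⁻¹ * ((Cf / μf) ^ 2 * r ^ 2)) := by
      have := mul_le_mul_of_nonneg_left hΔ (inv_nonneg.mpr hpmin.le)
      exact mul_le_mul_of_nonneg_left this hia.le
    have heq : (1 + 1 / a) * (pmin⁻¹ * ((Cf / μf) ^ 2 * r ^ 2))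
        = Cf ^ 2 * (μf * γ * ηk + 2 / pmin) / (μf ^ 3 * pmin * γ * ηk) * r ^ 2 := by
      rw [ha_def]
      field_simp
    have hnum : Cf ^ 2 * (μf * γ * ηk + 2 / pmin) ≤ Cf ^ 2 * (μf * γ0 * η0 + 2 / pmin) := by
      have w1 : γ * ηk ≤ γ0 * η0 := mul_le_mul hγ0 hη0 hηk.le hγ0p.le
      have : μf * γ * ηk ≤ μf * γ0 * η0 := by
        have := mul_le_mul_of_nonneg_left w1 hμf.le
        linarith [this]
      nlinarith [sq_nonneg Cf]
    have step2 : Cf ^ 2 * (μf * γ * ηk + 2 / pmin) / (μf ^ 3 * pmin * γ * ηk) * r ^ 2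
        ≤ Cf ^ 2 * (μf * γ0 * η0 + 2 / pmin) / (μf ^ 3 * pmin * γ * ηk) * r ^ 2 := by
      have hden : (0:ℝ) < μf ^ 3 * pmin * γ * ηk := by positivity
      exact mul_le_mul_of_nonneg_right ((div_le_div_iff_of_pos_right hden).mpr hnum) hr2
    calc (1 + 1 / a) * (pmin⁻¹ * Δsq) ≤ (1 + 1 / a) * (pmin⁻¹ * ((Cf / μf) ^ 2 * r ^ 2)) := step1
      _ = Cf ^ 2 * (μf * γ * ηk + 2 / pmin) / (μf ^ 3 * pmin * γ * ηk) * r ^ 2 := heq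
      _ ≤ _ := step2
  linarith

private lemma aux_ip {C1 C2 W ηk μf : ℝ} (m1 : 0 ≤ C1) (m2 : μf * W ≤ C2) (hηk : 0 ≤ ηk) :
    ηk * μf * W ≤ C1 + ηk * C2 := by
  nlinarith [mul_le_mul_of_nonneg_left m2 hηk]

private lemma aux_sing {W c μf Lf : ℝ} (h1 : μf * W ^ 2 ≤ c) (h2 : c ≤ Lf * W * W)
    (hc : Lf < μf) (hW : 0 ≤ W) : W = 0 := by
  have hsq : W ^ 2 ≤ 0 := by nlinarith
  have : W ^ 2 = 0 := le_antisymm hsq (sq_nonneg W)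
  exact pow_eq_zero_iff two_ne_zero |>.mp this

end AuxScalar

/-- The recursive error bound (Lemma 4.9 of the paper): under the stated
hypotheses, for a single randomized-block projected step `x⁺(i)` from `x ∈ X` (block `i` drawn
with probability `p_i`), the expected distance `Σᵢ pᵢ 𝒟(x⁺(i), x*_{η_k})` is bounded by
`(p_max/p_min)(1 − p_min μ_f γ η_k/2) 𝒟(x, x*_{η_{k−1}})
  + (C̄_f²(μ_f γ₀ η₀ + 2/p_min)/(μ_f³ p_min γ η_k))(η_{k−1}/η_k − 1)² + 2γ²B_F`. -/
theorem aRBIRG_recursive_error_bound {d : ℕ} {n : Fin d → ℕ}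
    (p : Fin d → ℝ) (hp : ∀ i, 0 < p i) (hpsum : ∑ i, p i = 1)
    (pmin pmax : ℝ) (hpmin : IsLeast (Set.range p) pmin) (hpmax : IsGreatest (Set.range p) pmax)
    (Xs : ∀ i, Set (EuclideanSpace ℝ (Fin (n i))))
    (hXne : ∀ i, (Xs i).Nonempty) (hXcl : ∀ i, IsClosed (Xs i)) (hXcv : ∀ i, Convex ℝ (Xs i))
    (X : Set (BlockSpace d n)) (hX : X = {x | ∀ i, x i ∈ Xs i})
    (f : BlockSpace d n → ℝ) (hf : ContDiff ℝ 1 f)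
    (μf : ℝ) (hμf : 0 < μf)
    (hstrong : ∀ x ∈ X, ∀ y ∈ X,
      f y + ⟪gradient f y, x - y⟫ + μf / 2 * ‖x - y‖ ^ 2 ≤ f x)
    (Lf : ℝ) (hLf : 0 < Lf)
    (hLip : ∀ x y : BlockSpace d n, ‖gradient f x - gradient f y‖ ≤ Lf * ‖x - y‖)
    (F : BlockSpace d n → BlockSpace d n) (hFc : Continuous F)
    (hmono : ∀ x ∈ X, ∀ y ∈ X, 0 ≤ ⟪F x - F y, x - y⟫)
    (LF BF : ℝ) (hLF : 0 ≤ LF) (hBF : 0 ≤ BF)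
    (hFgrowth : ∀ x ∈ X, ∀ y ∈ X, ‖F x - F y‖ ^ 2 ≤ LF ^ 2 * ‖x - y‖ ^ 2 + BF)
    (γ0 η0 γ ηk ηk1 : ℝ) (hγpos : 0 < γ) (hγ0 : γ ≤ γ0)
    (hηkpos : 0 < ηk) (hηk1 : ηk ≤ ηk1) (hη0 : ηk1 ≤ η0)
    (hratio : γ / ηk ≤ μf * pmin / (2 * pmax * (LF ^ 2 + η0 ^ 2 * Lf ^ 2)))
    (xek xek1 : BlockSpace d n)
    (hxek : xek ∈ VISol X (fun z => F z + ηk • gradient f z))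
    (hxek1 : xek1 ∈ VISol X (fun z => F z + ηk1 • gradient f z))
    (Cf : ℝ) (hCf : ‖gradient f xek1‖ ≤ Cf)
    (proj : ∀ i, EuclideanSpace ℝ (Fin (n i)) → EuclideanSpace ℝ (Fin (n i)))
    (hproj : ∀ i z, proj i z ∈ Xs i ∧ ∀ w ∈ Xs i, ‖z - proj i z‖ ≤ ‖z - w‖)
    (x : BlockSpace d n) (hxX : x ∈ X)
    (xplus : Fin d → BlockSpace d n)
    (hxplus : ∀ i, (xplus i) i = proj i (x i - γ • (F x i + ηk • gradient f x i))
      ∧ ∀ j, j ≠ i → (xplus i) j = x j) :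
    (∑ i, p i * ∑ j, (p j)⁻¹ * ‖(xplus i) j - xek j‖ ^ 2)
      ≤ pmax / pmin * (1 - pmin * μf * γ * ηk / 2)
          * (∑ j, (p j)⁻¹ * ‖x j - xek1 j‖ ^ 2)
        + Cf ^ 2 * (μf * γ0 * η0 + 2 / pmin) / (μf ^ 3 * pmin * γ * ηk)
          * (ηk1 / ηk - 1) ^ 2
        + 2 * γ ^ 2 * BF := by
  -- basic positivity facts
  obtain ⟨i0, hi0⟩ := hpmin.1
  have hpminpos : 0 < pmin := hi0 ▸ hp i0
  have hple : ∀ i, pmin ≤ p i := fun i => hpmin.2 ⟨i, rfl⟩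
  have hpge : ∀ i, p i ≤ pmax := fun i => hpmax.2 ⟨i, rfl⟩
  have hpmaxpos : 0 < pmax := lt_of_lt_of_le hpminpos (le_trans (hple i0) (hpge i0))
  have hpminmax : pmin ≤ pmax := le_trans (hple i0) (hpge i0)
  have hpmin1 : pmin ≤ 1 := by
    calc pmin ≤ p i0 := hple i0
    _ ≤ ∑ i, p i := Finset.single_le_sum (fun i _ => (hp i).le) (Finset.mem_univ i0)
    _ = 1 := hpsum
  have hη0pos : 0 < η0 := lt_of_lt_of_le hηkpos (le_trans hηk1 hη0)
  have hηk1pos : 0 < ηk1 := lt_of_lt_of_le hηkpos hηk1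
  have hCf0 : 0 ≤ Cf := le_trans (norm_nonneg _) hCf
  have hγ0pos : 0 < γ0 := lt_of_lt_of_le hγpos hγ0
  have hηk0 : ηk ≤ η0 := le_trans hηk1 hη0
  subst hX
  have hxmem : ∀ i, x i ∈ Xs i := hxX
  have hekmem : ∀ i, xek i ∈ Xs i := hxek.1
  have hek1mem : ∀ i, xek1 i ∈ Xs i := hxek1.1
  -- strong monotonicity of the gradient on X
  have hsm : ∀ u, (∀ i, u i ∈ Xs i) → ∀ v, (∀ i, v i ∈ Xs i) →
      μf * ‖u - v‖ ^ 2 ≤ ⟪gradient f u - gradient f v, u - v⟫ := by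
    intro u hu v hv
    have h1 := hstrong u hu v hv
    have h2 := hstrong v hv u hu
    have e1 : ⟪gradient f u, v - u⟫ = -⟪gradient f u, u - v⟫ := by
      rw [← inner_neg_right]; congr 1; abel
    have e2 : ‖v - u‖ = ‖u - v‖ := norm_sub_rev _ _
    rw [inner_sub_left]
    rw [e1, e2] at h2
    linarith
  -- blockwise variational inequality for VI solutions
  have hVIblock : ∀ (G : BlockSpace d n → BlockSpace d n) (s : BlockSpace d n),
      s ∈ VISol {x | ∀ i, x i ∈ Xs i} G → ∀ j, ∀ w ∈ Xs j, 0 ≤ ⟪G s j, w - s j⟫ := by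
    intro G s hs j w hw
    set y : BlockSpace d n := WithLp.toLp 2 (Function.update s.ofLp j w) with hy_def
    have hy : y ∈ {x : BlockSpace d n | ∀ i, x i ∈ Xs i} := by
      intro i
      rcases eq_or_ne i j with rfl | hij
      · simpa [hy_def] using hw
      · simpa [hy_def, Function.update_of_ne hij] using hs.1 i
    have h := hs.2 _ hy
    have hsum : ⟪G s, y - s⟫ = ⟪G s j, w - s j⟫ := by
      rw [PiLp.inner_apply, Finset.sum_eq_single j]
      · congr 1
        show y j - s j = w - s j
        rw [hy_def, PiLp.toLp_apply, Function.update_self]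
      · intro i _ hij
        have h0 : (y - s) i = 0 := by
          show y i - s i = 0
          rw [hy_def, PiLp.toLp_apply, Function.update_of_ne hij, sub_self]
        rw [h0, inner_zero_right]
      · simp
    rwa [hsum] at h
  -- norms on the product space
  have hnorm_eq : ∀ u v : BlockSpace d n, ‖u - v‖ ^ 2 = ∑ j, ‖u j - v j‖ ^ 2 := by
    intro u v
    rw [PiLp.norm_sq_eq_of_L2]
    rfl
  set a := pmin * μf * γ * ηk / 2 with ha_def
  have ha : 0 < a := by positivity
  set D0 := ∑ j, (p j)⁻¹ * ‖x j - xek j‖ ^ 2 with hD0_def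
  set D1 := ∑ j, (p j)⁻¹ * ‖x j - xek1 j‖ ^ 2 with hD1_def
  have hD0nn : 0 ≤ D0 := Finset.sum_nonneg fun j _ =>
    mul_nonneg (inv_nonneg.mpr (hp j).le) (sq_nonneg _)
  have hD1nn : 0 ≤ D1 := Finset.sum_nonneg fun j _ =>
    mul_nonneg (inv_nonneg.mpr (hp j).le) (sq_nonneg _)
  set u : BlockSpace d n := x - γ • (F x + ηk • gradient f x) with hu_def
  set v : BlockSpace d n := xek - γ • (F xek + ηk • gradient f xek) with hv_def
  set Xp : BlockSpace d n := WithLp.toLp 2 (fun j => proj j (u j)) with hXp_def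
  have huj : ∀ j, u j = x j - γ • (F x j + ηk • gradient f x j) := fun j => rfl
  have hvj : ∀ j, v j = xek j - γ • (F xek j + ηk • gradient f xek j) := fun j => rfl
  -- Step 1: the expected distance identity
  have hA_eq : (∑ i, p i * ∑ j, (p j)⁻¹ * ‖(xplus i) j - xek j‖ ^ 2)
      = D0 + ‖Xp - xek‖ ^ 2 - ‖x - xek‖ ^ 2 := by
    have hSi : ∀ i, (∑ j, (p j)⁻¹ * ‖(xplus i) j - xek j‖ ^ 2)
        = D0 + (p i)⁻¹ * (‖Xp i - xek i‖ ^ 2 - ‖x i - xek i‖ ^ 2) := by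
      intro i
      have hd : (∑ j, (p j)⁻¹ * ‖(xplus i) j - xek j‖ ^ 2) - D0
          = (p i)⁻¹ * (‖Xp i - xek i‖ ^ 2 - ‖x i - xek i‖ ^ 2) := by
        rw [hD0_def, ← Finset.sum_sub_distrib, Finset.sum_eq_single i]
        · have hxi : (xplus i) i = Xp i := (hxplus i).1
          rw [hxi]; ring
        · intro j _ hji
          rw [(hxplus i).2 j hji]; ring
        · simp
      linarith
    calc (∑ i, p i * ∑ j, (p j)⁻¹ * ‖(xplus i) j - xek j‖ ^ 2)
        = ∑ i, (p i * D0 + (‖Xp i - xek i‖ ^ 2 - ‖x i - xek i‖ ^ 2)) := by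
          refine Finset.sum_congr rfl fun i _ => ?_
          rw [hSi i, mul_add, ← mul_assoc, mul_inv_cancel₀ (hp i).ne', one_mul]
      _ = (∑ i, p i) * D0 + ((∑ i, ‖Xp i - xek i‖ ^ 2) - ∑ i, ‖x i - xek i‖ ^ 2) := by
          rw [Finset.sum_add_distrib, ← Finset.sum_mul, Finset.sum_sub_distrib]
      _ = D0 + ‖Xp - xek‖ ^ 2 - ‖x - xek‖ ^ 2 := by
          rw [hpsum, one_mul, hnorm_eq Xp xek, hnorm_eq x xek]; ring
  -- Step 2: contraction of the full-block step
  have hXpnorm : ‖Xp - xek‖ ^ 2 ≤ ‖u - v‖ ^ 2 := by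
    have hblock : ∀ j, ‖Xp j - xek j‖ ^ 2 ≤ ⟪u j - v j, Xp j - xek j⟫ := by
      intro j
      have h1 : ⟪u j - Xp j, xek j - Xp j⟫ ≤ 0 :=
        proj_inner_le (hXcv j) (hproj j (u j)).1 (hproj j (u j)).2 _ (hekmem j)
      have h2 : 0 ≤ ⟪F xek j + ηk • gradient f xek j, Xp j - xek j⟫ := by
        have := hVIblock (fun z => F z + ηk • gradient f z) xek hxek j (Xp j) (hproj j (u j)).1
        simpa using this
      have e1 : u j - v j = (u j - Xp j) + (Xp j - xek j) + (xek j - v j) := by abel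
      have e2 : xek j - v j = γ • (F xek j + ηk • gradient f xek j) := by
        rw [hvj j]; abel
      have h1' : 0 ≤ ⟪u j - Xp j, Xp j - xek j⟫ := by
        have : Xp j - xek j = -(xek j - Xp j) := by abel
        rw [this, inner_neg_right]; linarith
      have h3 : 0 ≤ ⟪xek j - v j, Xp j - xek j⟫ := by
        rw [e2, real_inner_smul_left]
        exact mul_nonneg hγpos.le h2
      rw [e1, inner_add_left, inner_add_left, real_inner_self_eq_norm_sq]
      linarith
    have hs : ‖Xp - xek‖ ^ 2 ≤ ⟪u - v, Xp - xek⟫ := by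
      rw [hnorm_eq Xp xek, PiLp.inner_apply]
      exact Finset.sum_le_sum fun j _ => hblock j
    have hcs : ⟪u - v, Xp - xek⟫ ≤ ‖u - v‖ * ‖Xp - xek‖ := real_inner_le_norm _ _
    exact aux_sq_le_sq (norm_nonneg _) (norm_nonneg _) hs hcs
  -- ratio hypothesis, cleared of the denominator
  have hsum_pos : 0 < LF ^ 2 + η0 ^ 2 * Lf ^ 2 :=
    add_pos_of_nonneg_of_pos (sq_nonneg LF) (mul_pos (pow_pos hη0pos 2) (pow_pos hLf 2))
  have hden : 0 < 2 * pmax * (LF ^ 2 + η0 ^ 2 * Lf ^ 2) :=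
    mul_pos (mul_pos two_pos hpmaxpos) hsum_pos
  have h1γ : γ * (2 * pmax * (LF ^ 2 + η0 ^ 2 * Lf ^ 2)) ≤ μf * pmin * ηk := by
    have := (div_le_div_iff₀ hηkpos hden).mp hratio
    linarith [this]
  -- Step 3: one-step contraction estimate
  have hw_ineq : ‖u - v‖ ^ 2 ≤ (1 - γ * ηk * μf) * ‖x - xek‖ ^ 2 + 2 * γ ^ 2 * BF := by
    have e : u - v = (x - xek) - γ • ((F x - F xek) + ηk • (gradient f x - gradient f xek)) := by
      rw [hu_def, hv_def]
      module
    have hexp : ‖u - v‖ ^ 2 = ‖x - xek‖ ^ 2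
        - 2 * (γ * ⟪x - xek, (F x - F xek) + ηk • (gradient f x - gradient f xek)⟫)
        + γ ^ 2 * ‖(F x - F xek) + ηk • (gradient f x - gradient f xek)‖ ^ 2 := by
      rw [e, norm_sub_sq_real, real_inner_smul_right, norm_smul, Real.norm_eq_abs,
        abs_of_pos hγpos]
      ring
    have hIP : ηk * μf * ‖x - xek‖ ^ 2
        ≤ ⟪x - xek, (F x - F xek) + ηk • (gradient f x - gradient f xek)⟫ := by
      rw [inner_add_right, real_inner_smul_right,
        real_inner_comm (F x - F xek) (x - xek),
        real_inner_comm (gradient f x - gradient f xek) (x - xek)]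
      exact aux_ip (hmono x hxX xek hxek.1) (hsm x hxmem xek hekmem) hηkpos.le
    have hG2 : ‖(F x - F xek) + ηk • (gradient f x - gradient f xek)‖ ^ 2
        ≤ 2 * (LF ^ 2 * ‖x - xek‖ ^ 2 + BF) + 2 * ηk ^ 2 * Lf ^ 2 * ‖x - xek‖ ^ 2 := by
      have tri : ‖(F x - F xek) + ηk • (gradient f x - gradient f xek)‖
          ≤ ‖F x - F xek‖ + ηk * ‖gradient f x - gradient f xek‖ := by
        refine le_trans (norm_add_le _ _) ?_
        rw [norm_smul, Real.norm_eq_abs, abs_of_pos hηkpos]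
      exact aux_gsq (norm_nonneg _) (norm_nonneg _) (norm_nonneg _) hηkpos hLf
        (norm_nonneg _) tri (hFgrowth x hxX xek hxek.1) (hLip x xek)
    rw [hexp]
    exact aux_uv (sq_nonneg _) hIP hG2 h1γ hηkpos hηk0 hγpos hpmaxpos hpminmax hμf hLF hBF hLf
  -- Step 4: perturbation bound between the two VI solutions
  have hdelta : ‖xek - xek1‖ ^ 2 ≤ (Cf / μf) ^ 2 * (ηk1 / ηk - 1) ^ 2 := by
    have h1 : (0:ℝ) ≤ ⟪F xek + ηk • gradient f xek, xek1 - xek⟫ := hxek.2 xek1 hxek1.1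
    have h2 : (0:ℝ) ≤ ⟪F xek1 + ηk1 • gradient f xek1, xek - xek1⟫ := hxek1.2 xek hxek.1
    rw [inner_add_left, real_inner_smul_left] at h1 h2
    have e1 : ⟪F xek, xek1 - xek⟫ = -⟪F xek, xek - xek1⟫ := by
      rw [← inner_neg_right]
      congr 1
      abel
    have e2 : ⟪gradient f xek, xek1 - xek⟫ = -⟪gradient f xek, xek - xek1⟫ := by
      rw [← inner_neg_right]
      congr 1
      abel
    rw [e1, e2] at h1
    have h1' : (0:ℝ) ≤ -⟪F xek, xek - xek1⟫ - ηk * ⟪gradient f xek, xek - xek1⟫ := by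
      rw [show -⟪F xek, xek - xek1⟫ - ηk * ⟪gradient f xek, xek - xek1⟫
        = -⟪F xek, xek - xek1⟫ + ηk * -⟪gradient f xek, xek - xek1⟫ from by ring]
      exact h1
    have hm : (0:ℝ) ≤ ⟪F xek, xek - xek1⟫ - ⟪F xek1, xek - xek1⟫ := by
      have := hmono xek hxek.1 xek1 hxek1.1
      rwa [inner_sub_left] at this
    have hsmp : μf * ‖xek - xek1‖ ^ 2
        ≤ ⟪gradient f xek, xek - xek1⟫ - ⟪gradient f xek1, xek - xek1⟫ := by
      have := hsm xek hekmem xek1 hek1mem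
      rwa [inner_sub_left] at this
    have hb2 : ⟪gradient f xek1, xek - xek1⟫ ≤ Cf * ‖xek - xek1‖ :=
      le_trans (real_inner_le_norm _ _) (mul_le_mul_of_nonneg_right hCf (norm_nonneg _))
    exact aux_delta h1' h2 hm hsmp hb2 (norm_nonneg _) hμf hηkpos hηk1 hCf0
  -- Step 5: comparison of weighted distances
  have hD0t : pmin * D0 ≤ ‖x - xek‖ ^ 2 := by
    rw [hnorm_eq x xek, hD0_def, Finset.mul_sum]
    exact Finset.sum_le_sum fun j _ => aux_term (hp j) hpminpos (hple j) (sq_nonneg _)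
  have hD0D1 : D0 ≤ (1 + a) * D1 + (1 + 1 / a) * (pmin⁻¹ * ‖xek - xek1‖ ^ 2) := by
    have step1 : D0 ≤ ∑ j, ((1 + a) * ((p j)⁻¹ * ‖x j - xek1 j‖ ^ 2)
        + (1 + 1 / a) * ((p j)⁻¹ * ‖xek1 j - xek j‖ ^ 2)) := by
      rw [hD0_def]
      refine Finset.sum_le_sum fun j _ => ?_
      have tri : ‖x j - xek j‖ ≤ ‖x j - xek1 j‖ + ‖xek1 j - xek j‖ := by
        have e : x j - xek j = (x j - xek1 j) + (xek1 j - xek j) := by abel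
        rw [e]
        exact norm_add_le _ _
      exact aux_young ha (inv_nonneg.mpr (hp j).le) tri (norm_nonneg _) (norm_nonneg _)
        (norm_nonneg _)
    have step2 : ∑ j, ((1 + a) * ((p j)⁻¹ * ‖x j - xek1 j‖ ^ 2)
          + (1 + 1 / a) * ((p j)⁻¹ * ‖xek1 j - xek j‖ ^ 2))
        = (1 + a) * D1 + (1 + 1 / a) * ∑ j, (p j)⁻¹ * ‖xek1 j - xek j‖ ^ 2 := by
      rw [Finset.sum_add_distrib, ← Finset.mul_sum, ← Finset.mul_sum, hD1_def]
    have step3 : ∑ j, (p j)⁻¹ * ‖xek1 j - xek j‖ ^ 2 ≤ pmin⁻¹ * ‖xek - xek1‖ ^ 2 := by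
      rw [hnorm_eq xek xek1, Finset.mul_sum]
      refine Finset.sum_le_sum fun j _ => ?_
      rw [norm_sub_rev (xek1 j)]
      exact mul_le_mul_of_nonneg_right (inv_anti₀ hpminpos (hple j)) (sq_nonneg _)
    have step4 : (1 + 1 / a) * (∑ j, (p j)⁻¹ * ‖xek1 j - xek j‖ ^ 2)
        ≤ (1 + 1 / a) * (pmin⁻¹ * ‖xek - xek1‖ ^ 2) :=
      mul_le_mul_of_nonneg_left step3
        (add_nonneg zero_le_one (div_nonneg zero_le_one ha.le))
    calc D0 ≤ _ := step1
      _ = _ := step2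
      _ ≤ (1 + a) * D1 + (1 + 1 / a) * (pmin⁻¹ * ‖xek - xek1‖ ^ 2) := (add_le_add_iff_left _).mpr step4
  -- Conclusion, in two cases
  by_cases hcase : μf ≤ Lf
  · have ha14 : a ≤ 1 / 4 :=
      aux_quarter ha_def h1γ hcase hpminpos hpmaxpos hpminmax hpmin1 hμf hγpos hηkpos hηk0
        hLf hLF
    have hSfinal : ‖Xp - xek‖ ^ 2 ≤ (1 - γ * ηk * μf) * ‖x - xek‖ ^ 2 + 2 * γ ^ 2 * BF :=
      le_trans hXpnorm hw_ineq
    calc (∑ i, p i * ∑ j, (p j)⁻¹ * ‖(xplus i) j - xek j‖ ^ 2)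
        = D0 + ‖Xp - xek‖ ^ 2 - ‖x - xek‖ ^ 2 := hA_eq
      _ ≤ _ := aux_final rfl hSfinal hD0t hD1nn hD0nn ha_def ha ha14 hD0D1 hdelta
          (sq_nonneg _) hpminpos hpmaxpos hpminmax hμf hγpos hηkpos hγ0 hηk0 hCf0 hγ0pos
          hη0pos hBF
  · push_neg at hcase
    have hsing : ∀ u' : BlockSpace d n, (∀ i, u' i ∈ Xs i) →
        ∀ v' : BlockSpace d n, (∀ i, v' i ∈ Xs i) → u' = v' := by
      intro u' hu' v' hv'
      have h1 := hsm u' hu' v' hv'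
      have h2 : ⟪gradient f u' - gradient f v', u' - v'⟫ ≤ (Lf * ‖u' - v'‖) * ‖u' - v'‖ :=
        le_trans (real_inner_le_norm _ _)
          (mul_le_mul_of_nonneg_right (hLip u' v') (norm_nonneg _))
      have hz : ‖u' - v'‖ = 0 :=
        aux_sing h1 (by rw [show Lf * ‖u' - v'‖ * ‖u' - v'‖
          = (Lf * ‖u' - v'‖) * ‖u' - v'‖ from rfl]; exact h2) hcase (norm_nonneg _)
      exact sub_eq_zero.mp (norm_eq_zero.mp hz)
    have hxe : x = xek := hsing x hxmem xek hekmem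
    have hxe1 : x = xek1 := hsing x hxmem xek1 hek1mem
    have hXssing : ∀ i, ∀ w ∈ Xs i, w = x i := by
      intro i w hw
      have hu : ∀ j, (WithLp.toLp 2 (Function.update x.ofLp i w) : BlockSpace d n) j ∈ Xs j := by
        intro j
        rcases eq_or_ne j i with rfl | hij
        · simpa using hw
        · simpa [Function.update_of_ne hij] using hxmem j
      have heq := hsing (WithLp.toLp 2 (Function.update x.ofLp i w)) hu x hxmem
      calc w = (WithLp.toLp 2 (Function.update x.ofLp i w) : BlockSpace d n) i := by simp
        _ = x i := by rw [heq]
    have hzero : ∀ i j, (xplus i) j = xek j := by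
      intro i j
      rcases eq_or_ne j i with rfl | hij
      · rw [(hxplus j).1, hXssing j _ ((hproj j _).1), hxe]
      · rw [(hxplus i).2 j hij, hxe]
    have hL : (∑ i, p i * ∑ j, (p j)⁻¹ * ‖(xplus i) j - xek j‖ ^ 2) = 0 := by
      refine Finset.sum_eq_zero fun i _ => ?_
      have hz : (∑ j, (p j)⁻¹ * ‖(xplus i) j - xek j‖ ^ 2) = 0 :=
        Finset.sum_eq_zero fun j _ => by rw [hzero i j, sub_self, norm_zero]; ring
      rw [hz, mul_zero]
    have hD1z : D1 = 0 := by
      rw [hD1_def]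
      exact Finset.sum_eq_zero fun j _ => by rw [hxe1, sub_self, norm_zero]; ring
    rw [hL, hD1z]
    have hC : (0:ℝ) ≤ Cf ^ 2 * (μf * γ0 * η0 + 2 / pmin) / (μf ^ 3 * pmin * γ * ηk)
        * (ηk1 / ηk - 1) ^ 2 := by
      apply mul_nonneg _ (sq_nonneg _)
      apply div_nonneg
      · exact mul_nonneg (sq_nonneg Cf)
          (add_nonneg (mul_nonneg (mul_nonneg hμf.le hγ0pos.le) hη0pos.le)
            (div_nonneg (by norm_num) hpminpos.le))
      · exact le_of_lt (mul_pos (mul_pos (mul_pos (pow_pos hμf 3) hpminpos) hγpos) hηkpos)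
    have hBF' : (0:ℝ) ≤ 2 * γ ^ 2 * BF := mul_nonneg (by positivity) hBF
    have hz2 : pmax / pmin * (1 - a) * (0:ℝ) = 0 := mul_zero _
    rw [hz2, zero_add]
    exact add_nonneg hC hBF'
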